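/- The Bernstein homomorphism of QSym itself coincides with the flipped internal comultiplication: β_QSym = τ ∘ Δ_P, where Δ_P is the internal comultiplication of QSym defined on the monomial basis by Δ_P(M_α) = Σ_A M_{row A} ⊗ M_{column A}, the sum ranging over all reduced matrices A of nonnegative integers with (read A)^red = α, and τ is the twist map f ⊗ g ↦ g ⊗ f. Equivalently, for every composition γ: Σ_α ξ_α(M_γ) ⊗ M_α = Σ_{A reduced, (read A)^red = γ} M_{column A} ⊗ M_{row A}, where ξ_α = m^{(k−1)} ∘ π_α ∘ Δ^{(k−1)} for α = (a₁,…,a_k). -/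

import Mathlib

open TensorProduct

/-- The underlying `k`-module of the quasisymmetric functions: the free `k`-module with basis
indexed by finite lists of natural numbers (the monomial quasisymmetric functions `M_α` for
compositions `α`, i.e. lists with positive entries, form the monomial basis). -/
abbrev QSymM (k : Type*) [CommRing k] : Type _ := List ℕ →₀ k

/-- A composition: a finite list of positive integers. -/
def IsComposition (α : List ℕ) : Prop := ∀ a ∈ α, 0 < a

/-- The monomial quasisymmetric function `M_α`, as a basis vector. -/
noncomputable def Mq (k : Type*) [CommRing k] (α : List ℕ) : QSymM k := Finsupp.single α 1

/-- The comultiplication of `QSym` (deconcatenation coproduct):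
`Δ (M_β) = ∑ i, M_{(b₁,…,b_i)} ⊗ M_{(b_{i+1},…,b_ℓ)}`. -/
noncomputable def comulQ (k : Type*) [CommRing k] : QSymM k →ₗ[k] QSymM k ⊗[k] QSymM k :=
  Finsupp.lsum k fun β => LinearMap.toSpanSingleton k _
    (∑ i ∈ Finset.range (β.length + 1), Mq k (β.take i) ⊗ₜ[k] Mq k (β.drop i))

/-- The counit of `QSym`: `ε (M_α) = 1` if `α = ()` and `0` otherwise. -/
noncomputable def counitQ (k : Type*) [CommRing k] : QSymM k →ₗ[k] k :=
  Finsupp.lsum k fun β => if β = [] then LinearMap.id else 0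

/-- The algebra homomorphism `ε_P : QSym → k`, `f ↦ f (1, 0, 0, …)`:
it sends `M_α ↦ 1` if `α` has length `≤ 1`, and `M_α ↦ 0` otherwise. -/
noncomputable def epsP (k : Type*) [CommRing k] : QSymM k →ₗ[k] k :=
  Finsupp.lsum k fun β => if β.length ≤ 1 then LinearMap.id else 0

/-- The projection of `QSym` onto its homogeneous component of degree `n`. -/
noncomputable def piQ (k : Type*) [CommRing k] (n : ℕ) : QSymM k →ₗ[k] QSymM k :=
  Finsupp.lsum k fun β => if β.sum = n then LinearMap.toSpanSingleton k _ (Mq k β) else 0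

section QSymProduct

variable (k : Type*) [CommRing k]

/-- Prepending an entry to the indexing composition, linearly extended. -/
noncomputable def mapConsQ (z : ℕ) : QSymM k →ₗ[k] QSymM k :=
  Finsupp.lmapDomain k k (fun l => z :: l)

/-- The quasi-shuffle (overlapping shuffle) product of two monomial quasisymmetric functions,
defined by the usual recursion; this is the product of `QSym` on the monomial basis. -/
noncomputable def qshuffle : List ℕ → List ℕ → QSymM k
  | [], b => Finsupp.single b 1
  | a :: as, [] => Finsupp.single (a :: as) 1
  | x :: xs, y :: ys =>
      mapConsQ k x (qshuffle xs (y :: ys)) + mapConsQ k y (qshuffle (x :: xs) ys) +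
        mapConsQ k (x + y) (qshuffle xs ys)
  termination_by a b => a.length + b.length

/-- The multiplication of `QSym`, as a linear map on the tensor square. -/
noncomputable def mulQ : QSymM k ⊗[k] QSymM k →ₗ[k] QSymM k :=
  TensorProduct.lift
    (Finsupp.lsum k fun α => LinearMap.toSpanSingleton k (QSymM k →ₗ[k] QSymM k)
      (Finsupp.lsum k fun β => LinearMap.toSpanSingleton k (QSymM k) (qshuffle k α β)))

/-- The unit of `QSym`. -/
noncomputable def unitQ : k →ₗ[k] QSymM k :=
  LinearMap.toSpanSingleton k (QSymM k) (Mq k [])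

end QSymProduct

section

variable (k : Type*) [CommRing k]

/-- `ξ_α = m^{(m-1)} ∘ π_α ∘ Δ^{(m-1)} : QSym → QSym` for a composition `α = (a₁, …, a_m)`
(written in its standard recursive form), used to define the Bernstein homomorphism
`β_QSym (f) = ∑_α ξ_α (f) ⊗ M_α` of `QSym` itself. -/
noncomputable def xiQ : List ℕ → (QSymM k →ₗ[k] QSymM k)
  | [] => unitQ k ∘ₗ counitQ k
  | a :: t => mulQ k ∘ₗ TensorProduct.map (piQ k a) (xiQ t) ∘ₗ comulQ k

end

/-- `w^red`: the composition obtained from a tuple of nonnegative integers by removing all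
zero entries. -/
def redList (l : List ℕ) : List ℕ := l.filter (· ≠ 0)

/-- The list of row sums of a matrix of nonnegative integers. -/
def rowSums {u v : ℕ} (A : Matrix (Fin u) (Fin v) ℕ) : List ℕ :=
  List.ofFn fun i => ∑ j, A i j

/-- The list of column sums of a matrix of nonnegative integers. -/
def colSums {u v : ℕ} (A : Matrix (Fin u) (Fin v) ℕ) : List ℕ :=
  List.ofFn fun j => ∑ i, A i j

/-- The row-by-row reading word of a matrix of nonnegative integers. -/
def readM {u v : ℕ} (A : Matrix (Fin u) (Fin v) ℕ) : List ℕ :=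
  (List.ofFn fun i => List.ofFn (A i)).flatten

/-- A matrix of nonnegative integers is reduced if no row and no column is the zero vector. -/
def MatReduced {u v : ℕ} (A : Matrix (Fin u) (Fin v) ℕ) : Prop :=
  (∀ i, ∃ j, A i j ≠ 0) ∧ (∀ j, ∃ i, A i j ≠ 0)

section Aux
namespace BQAux

/-- A matrix with `u` rows, represented as its list of columns. -/
abbrev Cols (u : ℕ) := List (Fin u → ℕ)

/-- Column sums of a column-list matrix. -/
def colS {u : ℕ} (L : Cols u) : List ℕ := L.map fun c => ∑ i, c i

/-- Row sums of a column-list matrix. -/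
def rowS {u : ℕ} (L : Cols u) : List ℕ := List.ofFn fun i => (L.map fun c => c i).sum

/-- The reduced reading word of a column-list matrix. -/
def rR {u : ℕ} (L : Cols u) : List ℕ :=
  (List.ofFn fun i : Fin u => redList (L.map fun c => c i)).flatten

lemma rR_zero (L : Cols 0) : rR L = [] := by simp [rR]

lemma rR_succ {u : ℕ} (L : Cols (u + 1)) :
    rR L = redList (L.map fun c => c 0) ++ rR (L.map Fin.tail) := by
  simp [rR, List.ofFn_succ, Fin.tail, List.map_map, Function.comp_def]

lemma redList_map_filter {u : ℕ} (L : Cols u) (i : Fin u) :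
    redList ((L.filter fun c => c ≠ 0).map fun c => c i) = redList (L.map fun c => c i) := by
  simp only [redList, List.filter_map, Function.comp_def]
  rw [List.filter_filter]
  congr 1
  apply List.filter_congr
  intro c _
  by_cases h : c i = 0 <;> simp [h]
  intro hc; rw [hc] at h; exact h rfl

lemma rR_filter {u : ℕ} (L : Cols u) : rR (L.filter fun c => c ≠ 0) = rR L := by
  have h : (fun i : Fin u => redList ((L.filter fun c => c ≠ 0).map fun c => c i))
      = fun i : Fin u => redList (L.map fun c => c i) := by
    funext i; exact redList_map_filter L i
  rw [rR, rR, h]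

lemma sum_redList (l : List ℕ) : (redList l).sum = l.sum := by
  induction l with
  | nil => rfl
  | cons a l ih =>
    by_cases h : a = 0 <;> simp [redList, List.filter_cons, h] at * <;> omega

lemma sum_map_filter_ne {u : ℕ} (f : (Fin u → ℕ) → ℕ) (hf : f 0 = 0) (M : List (Fin u → ℕ)) :
    ((M.filter fun c => c ≠ 0).map f).sum = (M.map f).sum := by
  induction M with
  | nil => rfl
  | cons c M ih =>
    simp only [ne_eq, decide_not] at ih
    rw [List.filter_cons]
    by_cases h : c = 0
    · simp [h, hf, ih]
    · simp [h, ih]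

lemma rowS_filter {u : ℕ} (L : Cols u) : rowS (L.filter fun c => c ≠ 0) = rowS L := by
  have h : (fun i : Fin u => ((L.filter fun c => c ≠ 0).map fun c => c i).sum)
      = fun i : Fin u => (L.map fun c => c i).sum := by
    funext i
    exact sum_map_filter_ne (fun c => c i) rfl L
  rw [rowS, rowS, h]

lemma rowS_succ {u : ℕ} (L : Cols (u + 1)) :
    rowS L = (L.map fun c => c 0).sum :: rowS (L.map Fin.tail) := by
  simp [rowS, List.ofFn_succ, Fin.tail, List.map_map, Function.comp_def]

end BQAux
end Aux
namespace BQAux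

/-- All ways of extending the column-list matrix `C` by a new first row whose reduced word
is `δ`, mirroring the quasi-shuffle recursion. -/
def Ext {u : ℕ} : List ℕ → Cols u → Finset (Cols (u + 1))
  | [], C => {C.map (Fin.cons 0)}
  | x :: xs, [] => {(x :: xs).map fun y => Fin.cons y 0}
  | x :: xs, c :: cs =>
      ((Ext xs (c :: cs)).image fun A => Fin.cons x 0 :: A) ∪
      ((Ext (x :: xs) cs).image fun A => Fin.cons 0 c :: A) ∪
      ((Ext xs cs).image fun A => Fin.cons x c :: A)
  termination_by δ C => δ.length + C.length

lemma ext_nil_right {u : ℕ} (δ : List ℕ) :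
    Ext δ ([] : Cols u) = {δ.map fun y => Fin.cons y 0} := by
  cases δ with
  | nil => simp [Ext]
  | cons x xs => simp [Ext]

lemma mem_ext_consL {u : ℕ} {x : ℕ} {xs : List ℕ} {C : Cols u} {A : Cols (u + 1)}
    (hA : A ∈ Ext xs C) : ((Fin.cons x 0 : Fin (u+1) → ℕ) :: A) ∈ Ext (x :: xs) C := by
  cases C with
  | nil =>
    rw [ext_nil_right] at hA ⊢
    simp only [Finset.mem_singleton] at hA ⊢
    simp [hA]
  | cons c cs =>
    rw [Ext]
    refine Finset.mem_union_left _ (Finset.mem_union_left _ ?_)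
    exact Finset.mem_image_of_mem _ hA

lemma mem_ext_consR {u : ℕ} {δ : List ℕ} {c : Fin u → ℕ} {cs : Cols u} {A : Cols (u + 1)}
    (hA : A ∈ Ext δ cs) : ((Fin.cons 0 c : Fin (u+1) → ℕ) :: A) ∈ Ext δ (c :: cs) := by
  cases δ with
  | nil =>
    rw [Ext] at hA ⊢
    simp only [Finset.mem_singleton] at hA ⊢
    simp [hA]
  | cons x xs =>
    rw [Ext]
    refine Finset.mem_union_left _ (Finset.mem_union_right _ ?_)
    exact Finset.mem_image_of_mem _ hA

lemma mem_ext_merge {u : ℕ} {x : ℕ} {xs : List ℕ} {c : Fin u → ℕ} {cs : Cols u}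
    {A : Cols (u + 1)} (hA : A ∈ Ext xs cs) :
    ((Fin.cons x c : Fin (u+1) → ℕ) :: A) ∈ Ext (x :: xs) (c :: cs) := by
  rw [Ext]
  exact Finset.mem_union_right _ (Finset.mem_image_of_mem _ hA)

/-- The key invariants of `Ext`: every member has nonzero columns, its first row reduces
to `δ`, and deleting the first row and then the zero columns recovers `C`. -/
lemma ext_spec {u : ℕ} : ∀ (δ : List ℕ) (C : Cols u), (∀ a ∈ δ, a ≠ 0) → (∀ c ∈ C, c ≠ 0) →
    ∀ A ∈ Ext δ C, (∀ c ∈ A, c ≠ 0) ∧ redList (A.map fun c => c 0) = δ ∧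
      ((A.map Fin.tail).filter fun c => c ≠ 0) = C
  | [], C => by
    intro hδ hC A hA
    rw [Ext, Finset.mem_singleton] at hA
    subst hA
    refine ⟨?_, ?_, ?_⟩
    · intro c hc
      simp only [List.mem_map] at hc
      obtain ⟨d, hd, rfl⟩ := hc
      intro h
      exact hC d hd (by
        have := congrArg Fin.tail h
        simpa [Fin.tail_cons, show Fin.tail (0 : Fin (u+1) → ℕ) = 0 from rfl] using this)
    · simp [redList, List.filter_map, Function.comp_def]
    · have h : List.map Fin.tail (List.map (Fin.cons 0) C : Cols (u+1)) = C := by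
        simp [List.map_map, Function.comp_def]
      rw [h, List.filter_eq_self]
      intro c hc; simpa using hC c hc
  | x :: xs, [] => by
    intro hδ hC A hA
    rw [ext_nil_right, Finset.mem_singleton] at hA
    subst hA
    refine ⟨?_, ?_, ?_⟩
    · intro c hc
      simp only [List.mem_map] at hc
      obtain ⟨y, hy, rfl⟩ := hc
      intro h
      exact hδ y hy (by
        have := congrFun h (0 : Fin (u+1))
        simpa using this)
    · rw [List.map_map]
      have : ((fun c : Fin (u+1) → ℕ => c 0) ∘ fun y : ℕ => (Fin.cons y 0 : Fin (u+1) → ℕ)) = id := by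
        funext y; rfl
      rw [this, List.map_id, redList, List.filter_eq_self]
      intro a ha; simpa using hδ a ha
    · rw [List.filter_eq_nil_iff]
      intro d hd
      simp only [List.map_map, List.mem_map, Function.comp_apply] at hd
      obtain ⟨y, hy, rfl⟩ := hd
      simp [Fin.tail_cons]
  | x :: xs, c :: cs => by
    intro hδ hC A hA
    have hδ' : ∀ a ∈ xs, a ≠ 0 := fun a ha => hδ a (List.mem_cons_of_mem _ ha)
    have hx : x ≠ 0 := hδ x (List.mem_cons_self)
    have hC' : ∀ d ∈ cs, d ≠ 0 := fun d hd => hC d (List.mem_cons_of_mem _ hd)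
    have hc : c ≠ 0 := hC c (List.mem_cons_self)
    rw [Ext, Finset.mem_union, Finset.mem_union] at hA
    rcases hA with (hA | hA) | hA
    · rw [Finset.mem_image] at hA
      obtain ⟨B, hB, rfl⟩ := hA
      obtain ⟨h1, h2, h3⟩ := ext_spec xs (c :: cs) hδ' hC B hB
      refine ⟨?_, ?_, ?_⟩
      · intro d hd
        rw [List.mem_cons] at hd
        rcases hd with rfl | hd
        · intro h; exact hx (by simpa using congrFun h 0)
        · exact h1 d hd
      · simp only [List.map_cons, Fin.cons_zero, redList, List.filter_cons]
        rw [redList] at h2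
        simp only [ne_eq, decide_not] at h2 ⊢
        simp [hx, h2]
      · simp only [List.map_cons, Fin.tail_cons, List.filter_cons]
        rw [h3]
        simp
    · rw [Finset.mem_image] at hA
      obtain ⟨B, hB, rfl⟩ := hA
      obtain ⟨h1, h2, h3⟩ := ext_spec (x :: xs) cs hδ hC' B hB
      refine ⟨?_, ?_, ?_⟩
      · intro d hd
        rw [List.mem_cons] at hd
        rcases hd with rfl | hd
        · intro h; exact hc (by
            have := congrArg Fin.tail h
            simpa [Fin.tail_cons, show Fin.tail (0 : Fin (u+1) → ℕ) = 0 from rfl] using this)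
        · exact h1 d hd
      · simp only [List.map_cons, Fin.cons_zero, redList, List.filter_cons]
        rw [redList] at h2
        simp only [ne_eq, decide_not] at h2 ⊢
        simp [h2]
      · simp only [List.map_cons, Fin.tail_cons, List.filter_cons]
        rw [h3]
        simp [hc]
    · rw [Finset.mem_image] at hA
      obtain ⟨B, hB, rfl⟩ := hA
      obtain ⟨h1, h2, h3⟩ := ext_spec xs cs hδ' hC' B hB
      refine ⟨?_, ?_, ?_⟩
      · intro d hd
        rw [List.mem_cons] at hd
        rcases hd with rfl | hd
        · intro h; exact hx (by simpa using congrFun h 0)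
        · exact h1 d hd
      · simp only [List.map_cons, Fin.cons_zero, redList, List.filter_cons]
        rw [redList] at h2
        simp only [ne_eq, decide_not] at h2 ⊢
        simp [hx, h2]
      · simp only [List.map_cons, Fin.tail_cons, List.filter_cons]
        rw [h3]
        simp [hc]
  termination_by δ C => δ.length + C.length

/-- Completeness: every matrix with nonzero columns arises from `Ext` applied to its reduced
first row and the matrix obtained by deleting the first row and the zero columns. -/
lemma mem_ext_self {u : ℕ} : ∀ (A : Cols (u + 1)), (∀ c ∈ A, c ≠ 0) →
    A ∈ Ext (redList (A.map fun c => c 0)) ((A.map Fin.tail).filter fun c => c ≠ 0) := by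
  intro A
  induction A with
  | nil =>
    intro _
    simp [redList, Ext]
  | cons c A ih =>
    intro hc
    have hA : ∀ d ∈ A, d ≠ 0 := fun d hd => hc d (List.mem_cons_of_mem _ hd)
    have hmem := ih hA
    have hcself : c = Fin.cons (c 0) (Fin.tail c) := (Fin.cons_self_tail c).symm
    by_cases h0 : c 0 = 0
    · have ht : Fin.tail c ≠ 0 := by
        intro h
        apply hc c (List.mem_cons_self)
        funext i
        refine Fin.cases ?_ ?_ i
        · exact h0
        · intro j; exact congrFun h j
      simp only [List.map_cons, redList, List.filter_cons, h0]
      rw [show (decide ((0:ℕ) ≠ 0)) = false by simp,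
        show (decide (Fin.tail c ≠ 0)) = true by simp [ht]]
      simp only [if_false, cond_false, if_true, cond_true]
      rw [← redList]
      have hce : c = Fin.cons 0 (Fin.tail c) := by rw [← h0]; exact hcself
      have hm := mem_ext_consR (c := Fin.tail c) hmem
      rwa [← hce] at hm
    · by_cases ht : Fin.tail c = 0
      · simp only [List.map_cons, redList, List.filter_cons]
        rw [show (decide (c 0 ≠ 0)) = true by simp [h0],
          show (decide (Fin.tail c ≠ 0)) = false by simp [ht]]
        simp only [if_true, cond_true, if_false, cond_false]
        rw [← redList]
        have hce : c = (Fin.cons (c 0) 0 : Fin (u+1) → ℕ) := by rw [← ht]; exact hcself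
        have hm := mem_ext_consL (x := c 0) hmem
        rwa [← hce] at hm
      · simp only [List.map_cons, redList, List.filter_cons]
        rw [show (decide (c 0 ≠ 0)) = true by simp [h0],
          show (decide (Fin.tail c ≠ 0)) = true by simp [ht]]
        simp only [if_true, cond_true]
        rw [← redList]
        have hm := mem_ext_merge (x := c 0) (c := Fin.tail c) hmem
        rwa [Fin.cons_self_tail] at hm

end BQAux
namespace BQAux

lemma ext_rowS {u : ℕ} {δ : List ℕ} {C : Cols u} (hδ : ∀ a ∈ δ, a ≠ 0)
    (hC : ∀ c ∈ C, c ≠ 0) {A : Cols (u + 1)} (hA : A ∈ Ext δ C) :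
    rowS A = δ.sum :: rowS C := by
  obtain ⟨h1, h2, h3⟩ := ext_spec δ C hδ hC A hA
  rw [rowS_succ]
  congr 1
  · rw [← h2]; exact (sum_redList _).symm
  · rw [← h3, rowS_filter]

lemma ext_rR {u : ℕ} {δ : List ℕ} {C : Cols u} (hδ : ∀ a ∈ δ, a ≠ 0)
    (hC : ∀ c ∈ C, c ≠ 0) {A : Cols (u + 1)} (hA : A ∈ Ext δ C) :
    rR A = δ ++ rR C := by
  obtain ⟨h1, h2, h3⟩ := ext_spec δ C hδ hC A hA
  rw [rR_succ, h2, ← h3, rR_filter]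

lemma ext_rows_ne {u : ℕ} {δ : List ℕ} {C : Cols u} (hδ : ∀ a ∈ δ, a ≠ 0) (hδne : δ ≠ [])
    (hC : ∀ c ∈ C, c ≠ 0) (hCrows : ∀ j : Fin u, ∃ c ∈ C, c j ≠ 0)
    {A : Cols (u + 1)} (hA : A ∈ Ext δ C) :
    ∀ i : Fin (u + 1), ∃ c ∈ A, c i ≠ 0 := by
  obtain ⟨h1, h2, h3⟩ := ext_spec δ C hδ hC A hA
  intro i
  refine Fin.cases ?_ ?_ i
  · by_contra hno
    push_neg at hno
    apply hδne
    rw [← h2, redList, List.filter_eq_nil_iff]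
    intro a ha
    simp only [List.mem_map] at ha
    obtain ⟨c, hc, rfl⟩ := ha
    simp [hno c hc]
  · intro j
    obtain ⟨c, hc, hcj⟩ := hCrows j
    rw [← h3] at hc
    rw [List.mem_filter] at hc
    obtain ⟨hc, -⟩ := hc
    simp only [List.mem_map] at hc
    obtain ⟨d, hd, rfl⟩ := hc
    exact ⟨d, hd, hcj⟩

lemma colS_cons {u : ℕ} (d : Fin u → ℕ) (A : Cols u) :
    colS (d :: A) = (∑ i, d i) :: colS A := rfl

lemma colS_map_cons0 {u : ℕ} (C : Cols u) :
    colS (List.map (Fin.cons 0) C : Cols (u + 1)) = colS C := by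
  simp [colS, List.map_map, Function.comp_def, Fin.sum_cons]

lemma disjoint_image_cons {u : ℕ} {d e : Fin u → ℕ} (hde : d ≠ e)
    (s t : Finset (Cols u)) :
    Disjoint (s.image (d :: ·)) (t.image (e :: ·)) := by
  rw [Finset.disjoint_left]
  intro a ha hb
  simp only [Finset.mem_image] at ha hb
  obtain ⟨A, -, rfl⟩ := ha
  obtain ⟨B, -, hB⟩ := hb
  injection hB with h1 _
  exact hde h1.symm

end BQAux

section L1
variable (k : Type*) [CommRing k]

namespace BQAux

lemma mapConsQ_single (z : ℕ) (l : List ℕ) (r : k) :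
    mapConsQ k z (Finsupp.single l r) = Finsupp.single (z :: l) r := by
  simp [mapConsQ, Finsupp.lmapDomain_apply, Finsupp.mapDomain_single]

/-- The key lemma: the quasi-shuffle of `δ` with the column sums of `C` is the sum of the
monomials indexed by the column sums of all one-row extensions of `C` by `δ`. -/
lemma qshuffle_ext_eq : ∀ (δ : List ℕ) {u : ℕ} (C : Cols u), (∀ a ∈ δ, a ≠ 0) →
    (∀ c ∈ C, c ≠ 0) →
    qshuffle k δ (colS C) = ∑ A ∈ Ext δ C, Finsupp.single (colS A) (1 : k)
  | [], u, C => by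
    intro hδ hC
    rw [qshuffle, Ext]
    rw [Finset.sum_singleton, colS_map_cons0]
  | x :: xs, u, [] => by
    intro hδ hC
    rw [show colS ([] : Cols u) = [] from rfl, qshuffle, ext_nil_right, Finset.sum_singleton]
    congr 1
    simp [colS, List.map_map, Function.comp_def, Fin.sum_cons]
  | x :: xs, u, c :: cs => by
    intro hδ hC
    have hδ' : ∀ a ∈ xs, a ≠ 0 := fun a ha => hδ a (List.mem_cons_of_mem _ ha)
    have hx : x ≠ 0 := hδ x (List.mem_cons_self)
    have hC' : ∀ d ∈ cs, d ≠ 0 := fun d hd => hC d (List.mem_cons_of_mem _ hd)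
    have hc : c ≠ 0 := hC c (List.mem_cons_self)
    have hne1 : (Fin.cons x 0 : Fin (u+1) → ℕ) ≠ Fin.cons 0 c := by
      intro h; exact hx (by simpa using congrFun h 0)
    have hne2 : (Fin.cons x 0 : Fin (u+1) → ℕ) ≠ Fin.cons x c := by
      intro h
      have := congrArg Fin.tail h
      simp only [Fin.tail_cons] at this
      exact hc this.symm
    have hne3 : (Fin.cons 0 c : Fin (u+1) → ℕ) ≠ Fin.cons x c := by
      intro h; exact hx (by simpa using (congrFun h 0).symm)
    rw [colS_cons, qshuffle, Ext]
    rw [Finset.sum_union (Finset.disjoint_union_left.mpr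
        ⟨disjoint_image_cons hne2 _ _, disjoint_image_cons hne3 _ _⟩),
      Finset.sum_union (disjoint_image_cons hne1 _ _)]
    rw [Finset.sum_image (fun _ _ _ _ h => (List.cons.injEq _ _ _ _ ▸ h).2),
      Finset.sum_image (fun _ _ _ _ h => (List.cons.injEq _ _ _ _ ▸ h).2),
      Finset.sum_image (fun _ _ _ _ h => (List.cons.injEq _ _ _ _ ▸ h).2)]
    rw [← colS_cons c cs,
      qshuffle_ext_eq xs (c :: cs) hδ' hC,
      qshuffle_ext_eq (x :: xs) cs hδ hC',
      qshuffle_ext_eq xs cs hδ' hC']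
    rw [map_sum, map_sum, map_sum]
    congr 1
    · congr 1
      · apply Finset.sum_congr rfl
        intro A _
        rw [mapConsQ_single, colS_cons]
        congr 2
        rw [Fin.sum_cons]
        simp
      · apply Finset.sum_congr rfl
        intro A _
        rw [mapConsQ_single, colS_cons, Fin.sum_cons, zero_add]
    · apply Finset.sum_congr rfl
      intro A _
      rw [mapConsQ_single, colS_cons, Fin.sum_cons]
  termination_by δ _ C => δ.length + C.length

end BQAux
end L1
namespace BQAux

/-- The finset of compositions of `n`. -/
def comps : ℕ → Finset (List ℕ)
  | 0 => {[]}
  | n + 1 => (Finset.range (n + 1)).biUnion fun j => (comps (n - j)).image fun t => (j + 1) :: t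

lemma mem_comps : ∀ (n : ℕ) (α : List ℕ), α ∈ comps n ↔ IsComposition α ∧ α.sum = n := by
  intro n
  induction n using Nat.strong_induction_on with
  | _ n ih =>
    match n with
    | 0 =>
      intro α
      simp only [comps, Finset.mem_singleton]
      constructor
      · rintro rfl
        exact ⟨fun a ha => absurd ha List.not_mem_nil, rfl⟩
      · rintro ⟨h1, h2⟩
        cases α with
        | nil => rfl
        | cons a t =>
          have := h1 a (List.mem_cons_self)
          simp only [List.sum_cons] at h2
          omega
    | m + 1 =>
      intro α
      rw [comps]
      simp only [Finset.mem_biUnion, Finset.mem_image, Finset.mem_range]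
      constructor
      · rintro ⟨j, hj, t, ht, rfl⟩
        obtain ⟨h1, h2⟩ := (ih (m - j) (by omega) t).mp ht
        refine ⟨?_, ?_⟩
        · intro a ha
          rcases List.mem_cons.mp ha with rfl | ha
          · omega
          · exact h1 a ha
        · simp only [List.sum_cons, h2]; omega
      · rintro ⟨h1, h2⟩
        cases α with
        | nil => simp at h2
        | cons a t =>
          have ha : 0 < a := h1 a (List.mem_cons_self)
          simp only [List.sum_cons] at h2
          refine ⟨a - 1, by omega, t, ?_, by congr 1; omega⟩
          refine (ih (m - (a - 1)) (by omega) t).mpr ⟨fun b hb => h1 b (List.mem_cons_of_mem _ hb), by omega⟩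

/-- The finset of reduced column-list matrices with reduced reading word `γ`. -/
def mats : List ℕ → Finset (Σ u : ℕ, Cols u)
  | [] => {⟨0, ([] : Cols 0)⟩}
  | g :: gs =>
      (Finset.range (g :: gs).length).biUnion fun j =>
        (mats ((g :: gs).drop (j + 1))).biUnion fun q =>
          (Ext ((g :: gs).take (j + 1)) q.2).image fun A => ⟨q.1 + 1, A⟩
  termination_by γ => γ.length
  decreasing_by simp [List.length_drop]

/-- The conditions cut out by `mats`. -/
def GoodC (γ : List ℕ) (q : Σ u : ℕ, Cols u) : Prop :=
  (∀ c ∈ q.2, c ≠ 0) ∧ (∀ i : Fin q.1, ∃ c ∈ q.2, c i ≠ 0) ∧ rR q.2 = γ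

lemma mem_mats_of {γ : List ℕ} (hne : γ ≠ []) {j : ℕ} (hj : j < γ.length)
    {q' : Σ u : ℕ, Cols u} (hq' : q' ∈ mats (γ.drop (j + 1))) {A : Cols (q'.1 + 1)}
    (hA : A ∈ Ext (γ.take (j + 1)) q'.2) : (⟨q'.1 + 1, A⟩ : Σ u : ℕ, Cols u) ∈ mats γ := by
  cases γ with
  | nil => exact absurd rfl hne
  | cons g gs =>
    rw [mats]
    simp only [Finset.mem_biUnion, Finset.mem_image, Finset.mem_range]
    exact ⟨j, hj, q', hq', A, hA, rfl⟩

lemma mats_good : ∀ (n : ℕ) (γ : List ℕ), γ.length ≤ n → IsComposition γ →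
    ∀ q ∈ mats γ, GoodC γ q := by
  intro n
  induction n with
  | zero =>
    intro γ hlen _ q hq
    rw [List.length_eq_zero_iff.mp (Nat.le_zero.mp hlen)] at hq ⊢
    rw [mats, Finset.mem_singleton] at hq
    subst hq
    exact ⟨by simp, fun i => i.elim0, rR_zero _⟩
  | succ n ih =>
    intro γ hlen hγ q hq
    cases γ with
    | nil =>
      rw [mats, Finset.mem_singleton] at hq
      subst hq
      exact ⟨by simp, fun i => i.elim0, rR_zero _⟩
    | cons g gs =>
      rw [mats] at hq
      simp only [Finset.mem_biUnion, Finset.mem_image, Finset.mem_range] at hq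
      obtain ⟨j, hj, q', hq', A, hA, rfl⟩ := hq
      set γ := g :: gs
      have hδpos : ∀ a ∈ γ.take (j + 1), a ≠ 0 :=
        fun a ha => (hγ a (List.take_subset _ _ ha)).ne'
      have hδne : γ.take (j + 1) ≠ [] := by
        rw [List.take_succ_cons]; exact List.cons_ne_nil _ _
      have hγ' : IsComposition (γ.drop (j + 1)) :=
        fun a ha => hγ a (List.drop_subset _ _ ha)
      have hlen' : (γ.drop (j + 1)).length ≤ n := by
        rw [List.length_drop]
        omega
      obtain ⟨hcols', hrows', hrR'⟩ := ih (γ.drop (j + 1)) hlen' hγ' q' hq'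
      refine ⟨(ext_spec _ _ hδpos hcols' A hA).1,
        ext_rows_ne hδpos hδne hcols' hrows' hA, ?_⟩
      rw [ext_rR hδpos hcols' hA, hrR', List.take_append_drop]

lemma good_mem_mats_zero {γ : List ℕ} (A : Cols 0) (hcols : ∀ c ∈ A, c ≠ 0)
    (hrR : rR A = γ) : (⟨0, A⟩ : Σ u : ℕ, Cols u) ∈ mats γ := by
  have hA : A = [] := by
    rw [List.eq_nil_iff_forall_not_mem]
    intro c hc
    exact hcols c hc (funext fun i => i.elim0)
  subst hA
  rw [← hrR, rR_zero, mats]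
  simp

lemma good_mem_mats : ∀ (n : ℕ) (γ : List ℕ), γ.length ≤ n →
    ∀ q, GoodC γ q → q ∈ mats γ := by
  intro n
  induction n with
  | zero =>
    intro γ hlen q hgood
    obtain ⟨u, A⟩ := q
    obtain ⟨hcols, hrows, hrR⟩ := hgood
    cases u with
    | zero => exact good_mem_mats_zero A hcols hrR
    | succ u =>
      exfalso
      obtain ⟨c, hc, hc0⟩ := hrows 0
      have hγnil : γ = [] := List.length_eq_zero_iff.mp (Nat.le_zero.mp hlen)
      have h2 : c 0 ∈ redList (A.map fun c => c 0) := by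
        rw [redList]
        exact List.mem_filter.mpr ⟨List.mem_map_of_mem hc, by simpa using hc0⟩
      have h3 := rR_succ A
      rw [hrR, hγnil] at h3
      rw [(List.append_eq_nil_iff.mp h3.symm).1] at h2
      exact List.not_mem_nil h2
  | succ n ih =>
    intro γ hlen q hgood
    obtain ⟨u, A⟩ := q
    obtain ⟨hcols, hrows, hrR⟩ := hgood
    cases u with
    | zero => exact good_mem_mats_zero A hcols hrR
    | succ u =>
      set δ := redList (A.map fun c => c 0) with hδdef
      have hδne : δ ≠ [] := by
        obtain ⟨c, hc, hc0⟩ := hrows 0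
        intro h
        have h1 : c 0 ∈ A.map (fun c => c 0) := List.mem_map_of_mem hc
        have h2 : c 0 ∈ δ := by
          rw [hδdef, redList]
          exact List.mem_filter.mpr ⟨h1, by simpa using hc0⟩
        rw [h] at h2
        exact List.not_mem_nil h2
      set C := (A.map Fin.tail).filter (fun c => c ≠ 0) with hCdef
      have hγeq : γ = δ ++ rR C := by
        rw [← hrR, rR_succ, hCdef, rR_filter]
      have hδlen : 1 ≤ δ.length := List.length_pos_iff.mpr hδne
      have hlencongr := congrArg List.length hγeq
      rw [List.length_append] at hlencongr
      have hCcols : ∀ c ∈ C, c ≠ 0 := by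
        intro c hc
        have := List.of_mem_filter hc
        simpa using this
      have hCrows : ∀ j : Fin u, ∃ c ∈ C, c j ≠ 0 := by
        intro j
        obtain ⟨c, hc, hcj⟩ := hrows j.succ
        have htne : Fin.tail c ≠ 0 := fun h => hcj (by
          rw [show c j.succ = Fin.tail c j from rfl, h]; rfl)
        refine ⟨Fin.tail c, ?_, hcj⟩
        rw [hCdef]
        exact List.mem_filter.mpr ⟨List.mem_map_of_mem hc, by simpa using htne⟩
      have hq' : (⟨u, C⟩ : Σ u : ℕ, Cols u) ∈ mats (rR C) := by
        apply ih
        · omega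
        · exact ⟨hCcols, hCrows, rfl⟩
      have hstep : δ.length - 1 + 1 = δ.length := by omega
      have hA : A ∈ Ext (γ.take (δ.length - 1 + 1)) C := by
        rw [hstep, hγeq, List.take_left]
        exact mem_ext_self A hcols
      have hγne : γ ≠ [] := by
        rw [hγeq]; intro h; exact hδne (List.append_eq_nil_iff.mp h).1
      have hj : δ.length - 1 < γ.length := by omega
      have hdrop : γ.drop (δ.length - 1 + 1) = rR C := by
        rw [hstep, hγeq, List.drop_left]
      rw [← hdrop] at hq'
      exact mem_mats_of hγne hj hq' hA

lemma mats_good' {γ : List ℕ} (hγ : IsComposition γ) {q : Σ u : ℕ, Cols u}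
    (hq : q ∈ mats γ) : GoodC γ q := mats_good γ.length γ le_rfl hγ q hq

lemma good_mem_mats' {γ : List ℕ} {q : Σ u : ℕ, Cols u} (h : GoodC γ q) : q ∈ mats γ :=
  good_mem_mats γ.length γ le_rfl q h

end BQAux
namespace BQAux

section Sums
variable {M : Type*} [AddCommMonoid M]

lemma sum_comps_succ (m : ℕ) (f : List ℕ → M) :
    ∑ α ∈ comps (m + 1), f α
      = ∑ j ∈ Finset.range (m + 1), ∑ t ∈ comps (m - j), f ((j + 1) :: t) := by
  rw [comps, Finset.sum_biUnion ?disj]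
  case disj =>
    intro j _ j' _ hne
    simp only [Function.onFun]
    apply Finset.disjoint_left.mpr
    intro α hα hα'
    simp only [Finset.mem_image] at hα hα'
    obtain ⟨t, -, rfl⟩ := hα
    obtain ⟨t', -, h⟩ := hα'
    injection h with h1 _
    exact hne (by omega)
  apply Finset.sum_congr rfl
  intro j hj
  rw [Finset.sum_image (fun a _ b _ h => by injection h)]

lemma ext_mats_inj {γ : List ℕ} (hγ : IsComposition γ) {j j' : ℕ} (hj : j + 1 ≤ γ.length)
    (hj' : j' + 1 ≤ γ.length) {q q' : Σ u : ℕ, Cols u} (hq : q ∈ mats (γ.drop (j + 1)))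
    (hq' : q' ∈ mats (γ.drop (j' + 1))) {A : Cols (q.1 + 1)} {A' : Cols (q'.1 + 1)}
    (hA : A ∈ Ext (γ.take (j + 1)) q.2) (hA' : A' ∈ Ext (γ.take (j' + 1)) q'.2)
    (heq : (⟨q.1 + 1, A⟩ : Σ u : ℕ, Cols u) = ⟨q'.1 + 1, A'⟩) : j = j' ∧ q = q' := by
  have hδpos : ∀ a ∈ γ.take (j + 1), a ≠ 0 :=
    fun a ha => (hγ a (List.take_subset _ _ ha)).ne'
  have hδpos' : ∀ a ∈ γ.take (j' + 1), a ≠ 0 :=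
    fun a ha => (hγ a (List.take_subset _ _ ha)).ne'
  have hgood := mats_good' (fun a ha => hγ a (List.drop_subset _ _ ha)) hq
  have hgood' := mats_good' (fun a ha => hγ a (List.drop_subset _ _ ha)) hq'
  obtain ⟨u, B⟩ := q
  obtain ⟨u', B'⟩ := q'
  injection heq with h1 h2
  have h1' : u + 1 = u' + 1 := h1
  obtain rfl : u = u' := by omega
  have hAA : A = A' := eq_of_heq h2
  subst hAA
  obtain ⟨-, hrow, hfil⟩ := ext_spec _ _ hδpos hgood.1 A hA
  obtain ⟨-, hrow', hfil'⟩ := ext_spec _ _ hδpos' hgood'.1 A hA'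
  have htake : γ.take (j + 1) = γ.take (j' + 1) := by rw [← hrow, ← hrow']
  have hjj : j = j' := by
    have := congrArg List.length htake
    rw [List.length_take, List.length_take] at this
    omega
  refine ⟨hjj, ?_⟩
  have hBB : (⟨u, B⟩ : Σ u : ℕ, Cols u).snd = (⟨u, B'⟩ : Σ u : ℕ, Cols u).snd := by
    rw [← hfil, ← hfil']
  have : B = B' := hBB
  rw [this]

lemma sum_mats_ne_nil {γ : List ℕ} (hγ : IsComposition γ) (hne : γ ≠ [])
    (f : (Σ u : ℕ, Cols u) → M) :
    ∑ q ∈ mats γ, f q = ∑ j ∈ Finset.range γ.length, ∑ q ∈ mats (γ.drop (j + 1)),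
      ∑ A ∈ Ext (γ.take (j + 1)) q.2, f ⟨q.1 + 1, A⟩ := by
  obtain ⟨g, gs, rfl⟩ : ∃ g gs, γ = g :: gs := by
    cases γ with
    | nil => exact absurd rfl hne
    | cons g gs => exact ⟨g, gs, rfl⟩
  rw [mats, Finset.sum_biUnion ?disjout]
  case disjout =>
    intro j hj j' hj' hnejj
    simp only [Function.onFun]
    apply Finset.disjoint_left.mpr
    intro p hp hp'
    have hjr : j + 1 ≤ (g :: gs).length := by
      have : j ∈ Finset.range (g :: gs).length := hj
      rw [Finset.mem_range] at this; omega
    have hjr' : j' + 1 ≤ (g :: gs).length := by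
      have : j' ∈ Finset.range (g :: gs).length := hj'
      rw [Finset.mem_range] at this; omega
    simp only [Finset.mem_biUnion, Finset.mem_image] at hp hp'
    obtain ⟨q, hq, A, hA, rfl⟩ := hp
    obtain ⟨q', hq', A', hA', h⟩ := hp'
    exact hnejj (ext_mats_inj hγ hjr hjr' hq hq' hA hA' h.symm).1
  apply Finset.sum_congr rfl
  intro j hj
  rw [Finset.sum_biUnion ?disjin]
  case disjin =>
    intro q hq q' hq' hneqq
    simp only [Function.onFun]
    apply Finset.disjoint_left.mpr
    intro p hp hp'
    have hjr : j + 1 ≤ (g :: gs).length := by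
      rw [Finset.mem_range] at hj; omega
    simp only [Finset.mem_image] at hp hp'
    obtain ⟨A, hA, rfl⟩ := hp
    obtain ⟨A', hA', h⟩ := hp'
    have hq2 : q ∈ mats ((g :: gs).drop (j + 1)) := hq
    have hq2' : q' ∈ mats ((g :: gs).drop (j + 1)) := hq'
    exact hneqq (ext_mats_inj hγ hjr hjr hq2 hq2' hA hA' h.symm).2
  apply Finset.sum_congr rfl
  intro q hq
  rw [Finset.sum_image (fun a _ b _ h => sigma_mk_injective h)]

end Sums
end BQAux
namespace BQAux
variable (k : Type*) [CommRing k]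

lemma piQ_Mq (n : ℕ) (β : List ℕ) :
    piQ k n (Mq k β) = if β.sum = n then Mq k β else 0 := by
  rw [Mq, piQ, Finsupp.lsum_single]
  split
  · exact LinearMap.toSpanSingleton_apply_one _ _ _
  · rfl

lemma comulQ_Mq (β : List ℕ) :
    comulQ k (Mq k β)
      = ∑ i ∈ Finset.range (β.length + 1), Mq k (β.take i) ⊗ₜ[k] Mq k (β.drop i) := by
  rw [Mq, comulQ, Finsupp.lsum_single, LinearMap.toSpanSingleton_apply_one]

lemma counitQ_Mq (β : List ℕ) :
    counitQ k (Mq k β) = if β = [] then 1 else 0 := by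
  rw [Mq, counitQ, Finsupp.lsum_single]
  split
  · rfl
  · rfl

lemma mulQ_Mq (α β : List ℕ) :
    mulQ k (Mq k α ⊗ₜ[k] Mq k β) = qshuffle k α β := by
  rw [mulQ, TensorProduct.lift.tmul, Mq, Mq, Finsupp.lsum_single,
    LinearMap.toSpanSingleton_apply_one, Finsupp.lsum_single, LinearMap.toSpanSingleton_apply_one]

lemma xiQ_nil_Mq (γ : List ℕ) :
    xiQ k [] (Mq k γ) = if γ = [] then Mq k [] else 0 := by
  rw [xiQ, LinearMap.comp_apply, counitQ_Mq, unitQ]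
  split
  · exact LinearMap.toSpanSingleton_apply_one _ _ _
  · exact map_zero _

lemma xiQ_cons_Mq (a : ℕ) (t γ : List ℕ) :
    xiQ k (a :: t) (Mq k γ) = ∑ i ∈ Finset.range (γ.length + 1),
      if (γ.take i).sum = a then mulQ k (Mq k (γ.take i) ⊗ₜ[k] xiQ k t (Mq k (γ.drop i)))
      else 0 := by
  rw [xiQ, LinearMap.comp_apply, LinearMap.comp_apply, comulQ_Mq, map_sum, map_sum]
  apply Finset.sum_congr rfl
  intro i _
  rw [TensorProduct.map_tmul, piQ_Mq]
  split
  · rfl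
  · simp

lemma xiQ_ne_deg : ∀ (α γ : List ℕ), α.sum ≠ γ.sum → xiQ k α (Mq k γ) = 0
  | [], γ => by
    intro h
    rw [xiQ_nil_Mq]
    split
    · rename_i hγ
      subst hγ
      exact absurd rfl h
    · rfl
  | a :: t, γ => by
    intro h
    rw [xiQ_cons_Mq]
    apply Finset.sum_eq_zero
    intro i _
    split
    · rename_i hi
      have hsum := List.sum_take_add_sum_drop γ i
      have : t.sum ≠ (γ.drop i).sum := by
        simp only [List.sum_cons] at h
        omega
      rw [xiQ_ne_deg t _ this]
      simp
    · rfl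

end BQAux
namespace BQAux
variable (k : Type*) [CommRing k]

noncomputable local instance instZeroTensor : Zero (QSymM k ⊗[k] QSymM k) :=
  (inferInstance : AddCommMonoid (QSymM k ⊗[k] QSymM k)).toAddMonoid.toZero

lemma mapConsQ_Mq (z : ℕ) (l : List ℕ) : mapConsQ k z (Mq k l) = Mq k (z :: l) := by
  rw [Mq, Mq, mapConsQ_single]

lemma sum_range_ite_eq {N : Type*} [AddCommMonoid N] (m s : ℕ) (G : ℕ → N) :
    ∑ j ∈ Finset.range (m + 1), (if s = j + 1 then G j else 0)
      = if 1 ≤ s ∧ s ≤ m + 1 then G (s - 1) else 0 := by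
  cases s with
  | zero =>
    rw [if_neg (by omega)]
    apply Finset.sum_eq_zero
    intro j _
    rw [if_neg (by omega)]
  | succ r =>
    have h1 : ∀ j ∈ Finset.range (m + 1),
        (if r + 1 = j + 1 then G j else 0) = (if j = r then G j else 0) :=
      fun j _ => if_congr (by omega) rfl rfl
    rw [Finset.sum_congr rfl h1, Finset.sum_ite_eq' (Finset.range (m + 1)) r G]
    exact if_congr (by rw [Finset.mem_range]; omega) rfl rfl

lemma main_nil :
    ∑ α ∈ comps ([] : List ℕ).sum, xiQ k α (Mq k []) ⊗ₜ[k] Mq k α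
      = ∑ q ∈ mats [], Mq k (colS q.2) ⊗ₜ[k] Mq k (rowS q.2) := by
  rw [show ([] : List ℕ).sum = 0 from rfl, comps, mats, Finset.sum_singleton,
    Finset.sum_singleton, xiQ_nil_Mq, if_pos rfl]
  simp [colS, rowS]

lemma main_eq : ∀ (n : ℕ) (γ : List ℕ), γ.length ≤ n → IsComposition γ →
    ∑ α ∈ comps γ.sum, xiQ k α (Mq k γ) ⊗ₜ[k] Mq k α
      = ∑ q ∈ mats γ, Mq k (colS q.2) ⊗ₜ[k] Mq k (rowS q.2) := by
  intro n
  induction n with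
  | zero =>
    intro γ hlen _
    rw [List.length_eq_zero_iff.mp (Nat.le_zero.mp hlen)]
    exact main_nil k
  | succ n ih =>
    intro γ hlen hγ
    by_cases hnil : γ = []
    · rw [hnil]; exact main_nil k
    · have hpos : 0 < γ.sum := by
        cases γ with
        | nil => exact absurd rfl hnil
        | cons g gs =>
          have := hγ g (List.mem_cons_self)
          simp only [List.sum_cons]
          omega
      obtain ⟨m, hm⟩ : ∃ m, γ.sum = m + 1 := ⟨γ.sum - 1, by omega⟩
      have hs1 : ∀ i, 1 ≤ i → 1 ≤ (γ.take i).sum := by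
        intro i hi
        cases γ with
        | nil => exact absurd rfl hnil
        | cons g gs =>
          cases i with
          | zero => omega
          | succ i =>
            rw [List.take_succ_cons, List.sum_cons]
            have := hγ g (List.mem_cons_self)
            omega
      have hs2 : ∀ i, (γ.take i).sum ≤ m + 1 := by
        intro i
        rw [← hm]
        have := List.sum_take_add_sum_drop γ i
        omega
      rw [sum_mats_ne_nil hγ hnil, hm, sum_comps_succ]
      have stepA : ∀ j ∈ Finset.range (m + 1), ∀ t ∈ comps (m - j),
          xiQ k ((j + 1) :: t) (Mq k γ) ⊗ₜ[k] Mq k ((j + 1) :: t)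
            = ∑ i ∈ Finset.range (γ.length + 1), (if (γ.take i).sum = j + 1 then
                mulQ k (Mq k (γ.take i) ⊗ₜ[k] xiQ k t (Mq k (γ.drop i))) ⊗ₜ[k]
                  Mq k ((j + 1) :: t) else 0 : QSymM k ⊗[k] QSymM k) := by
        intro j _ t _
        rw [xiQ_cons_Mq, TensorProduct.sum_tmul]
        apply Finset.sum_congr rfl
        intro i _
        split <;> simp
      rw [Finset.sum_congr rfl (fun j hj => Finset.sum_congr rfl (fun t ht => stepA j hj t ht))]
      rw [Finset.sum_congr rfl (fun j _ => Finset.sum_comm)]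
      rw [Finset.sum_comm]
      have stepC : ∀ i ∈ Finset.range (γ.length + 1),
          (∑ j ∈ Finset.range (m + 1), ∑ t ∈ comps (m - j), (if (γ.take i).sum = j + 1 then
              mulQ k (Mq k (γ.take i) ⊗ₜ[k] xiQ k t (Mq k (γ.drop i))) ⊗ₜ[k]
                Mq k ((j + 1) :: t) else 0 : QSymM k ⊗[k] QSymM k))
            = (if 1 ≤ i then (∑ t ∈ comps ((γ.drop i).sum),
                mulQ k (Mq k (γ.take i) ⊗ₜ[k] xiQ k t (Mq k (γ.drop i))) ⊗ₜ[k]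
                  Mq k ((γ.take i).sum :: t)) else 0 : QSymM k ⊗[k] QSymM k) := by
        intro i _
        have h1 : ∀ j ∈ Finset.range (m + 1),
            (∑ t ∈ comps (m - j), (if (γ.take i).sum = j + 1 then
              mulQ k (Mq k (γ.take i) ⊗ₜ[k] xiQ k t (Mq k (γ.drop i))) ⊗ₜ[k]
                Mq k ((j + 1) :: t) else 0 : QSymM k ⊗[k] QSymM k))
              = (if (γ.take i).sum = j + 1 then (∑ t ∈ comps (m - j),
                  mulQ k (Mq k (γ.take i) ⊗ₜ[k] xiQ k t (Mq k (γ.drop i))) ⊗ₜ[k]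
                    Mq k ((j + 1) :: t)) else 0 : QSymM k ⊗[k] QSymM k) := by
          intro j _
          split <;> simp
        rw [Finset.sum_congr rfl h1, sum_range_ite_eq]
        by_cases hi : 1 ≤ i
        · rw [if_pos ⟨hs1 i hi, hs2 i⟩, if_pos hi]
          have e1 : m - ((γ.take i).sum - 1) = (γ.drop i).sum := by
            have := List.sum_take_add_sum_drop γ i
            have := hs1 i hi
            omega
          have e2 : (γ.take i).sum - 1 + 1 = (γ.take i).sum := by
            have := hs1 i hi
            omega
          simp only [e1, e2]
        · have hi0 : i = 0 := by omega
          subst hi0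
          rw [if_neg (by simp), if_neg hi]
      rw [Finset.sum_congr rfl stepC, Finset.sum_range_succ', if_neg (by omega), add_zero]
      apply Finset.sum_congr rfl
      intro j hj
      rw [Finset.mem_range] at hj
      rw [if_pos (by omega)]
      have hγ' : IsComposition (γ.drop (j + 1)) := fun a ha => hγ a (List.drop_subset _ _ ha)
      have hlen' : (γ.drop (j + 1)).length ≤ n := by
        rw [List.length_drop]
        omega
      have hδpos : ∀ a ∈ γ.take (j + 1), a ≠ 0 :=
        fun a ha => (hγ a (List.take_subset _ _ ha)).ne'
      have hIH := ih (γ.drop (j + 1)) hlen' hγ'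
      have hΨ := congrArg (⇑(TensorProduct.map
        (mulQ k ∘ₗ TensorProduct.mk k (QSymM k) (QSymM k) (Mq k (γ.take (j + 1))))
        (mapConsQ k (γ.take (j + 1)).sum))) hIH
      rw [map_sum, map_sum] at hΨ
      simp only [TensorProduct.map_tmul, LinearMap.comp_apply, TensorProduct.mk_apply,
        mapConsQ_Mq] at hΨ
      rw [hΨ]
      apply Finset.sum_congr rfl
      intro q hq
      have hgood := mats_good' hγ' hq
      rw [mulQ_Mq, qshuffle_ext_eq k _ q.2 hδpos hgood.1, TensorProduct.sum_tmul]
      apply Finset.sum_congr rfl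
      intro A hA
      rw [← ext_rowS hδpos hgood.1 hA]
      rfl

end BQAux
namespace BQAux

/-- The matrix sigma-type used in the theorem. -/
abbrev MatS : Type := Σ u : ℕ, Σ v : ℕ, Matrix (Fin u) (Fin v) ℕ

/-- From column-list to matrix. -/
def toMat (q : Σ u : ℕ, Cols u) : MatS :=
  ⟨q.1, q.2.length, Matrix.of fun i j => q.2.get j i⟩

lemma colS_ofFn {u v : ℕ} (A : Matrix (Fin u) (Fin v) ℕ) :
    colS (List.ofFn fun j : Fin v => fun i => A i j) = colSums A := by
  rw [colS, List.map_ofFn, colSums]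
  rfl

lemma rowS_ofFn {u v : ℕ} (A : Matrix (Fin u) (Fin v) ℕ) :
    rowS (List.ofFn fun j : Fin v => fun i => A i j) = rowSums A := by
  rw [rowS, rowSums]
  congr 1
  funext i
  rw [List.map_ofFn, List.sum_ofFn]
  rfl

lemma rR_ofFn {u v : ℕ} (A : Matrix (Fin u) (Fin v) ℕ) :
    rR (List.ofFn fun j : Fin v => fun i => A i j) = redList (readM A) := by
  rw [rR, readM, redList, List.filter_flatten, List.map_ofFn]
  congr 1
  congr 1
  funext i
  rw [List.map_ofFn]
  rfl

lemma ofFn_toMat {u : ℕ} (L : Cols u) :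
    (List.ofFn fun j : Fin L.length => fun i => (Matrix.of fun i j => L.get j i) i j) = L := by
  show List.ofFn L.get = L
  exact List.ofFn_get L

lemma sigma3_eq {u v v' : ℕ} (h : v = v') {A : Matrix (Fin u) (Fin v) ℕ}
    {A' : Matrix (Fin u) (Fin v') ℕ} (hA : ∀ i j, A i j = A' i (Fin.cast h j)) :
    (⟨u, v, A⟩ : MatS) = ⟨u, v', A'⟩ := by
  subst h
  have : A = A' := by
    ext i j
    exact hA i j
  rw [this]

lemma toMat_bijOn (γ : List ℕ) (hγ : IsComposition γ) :
    Set.BijOn toMat ↑(mats γ)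
      {p : MatS | MatReduced p.2.2 ∧ redList (readM p.2.2) = γ} := by
  refine ⟨?_, ?_, ?_⟩
  · -- MapsTo
    intro q hq
    obtain ⟨hcols, hrows, hrR⟩ := mats_good' hγ hq
    obtain ⟨u, L⟩ := q
    constructor
    · constructor
      · intro i
        obtain ⟨c, hc, hci⟩ := hrows i
        obtain ⟨j, hj⟩ := List.mem_iff_get.mp hc
        refine ⟨j, ?_⟩
        show L.get j i ≠ 0
        rw [hj]
        exact hci
      · intro j
        have hmem : L.get j ∈ L := L.get_mem j
        have := hcols _ hmem
        rw [Function.ne_iff] at this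
        obtain ⟨i, hi⟩ := this
        exact ⟨i, hi⟩
    · show redList (readM (Matrix.of fun i j => L.get j i)) = γ
      rw [← rR_ofFn, ofFn_toMat]
      exact hrR
  · -- InjOn
    intro q _ q' _ h
    obtain ⟨u, L⟩ := q
    obtain ⟨u', L'⟩ := q'
    simp only [toMat] at h
    injection h with h1 h2
    subst h1
    have h3 := eq_of_heq h2
    have h4 : L.length = L'.length := congrArg Sigma.fst h3
    have hent : ∀ (n : ℕ) (i : Fin u) (hn : n < L.length) (hn' : n < L'.length),
        L.get ⟨n, hn⟩ i = L'.get ⟨n, hn'⟩ i := by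
      intro n i hn hn'
      have h5 := congrArg (fun p : Σ v : ℕ, Matrix (Fin u) (Fin v) ℕ =>
        if h : n < p.1 then p.2 i ⟨n, h⟩ else 0) h3
      simpa [hn, hn'] using h5
    have : L = L' := by
      apply List.ext_get h4
      intro n hn hn'
      funext i
      exact hent n i hn hn'
    rw [this]
  · -- SurjOn
    intro p hp
    obtain ⟨u, v, A⟩ := p
    obtain ⟨⟨hr, hc⟩, hred⟩ := hp
    refine ⟨⟨u, List.ofFn fun j : Fin v => fun i => A i j⟩, ?_, ?_⟩
    · apply good_mem_mats'
      refine ⟨?_, ?_, ?_⟩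
      · intro c hcm
        rw [List.mem_ofFn] at hcm
        obtain ⟨j, rfl⟩ := hcm
        obtain ⟨i, hi⟩ := hc j
        intro h0
        exact hi (congrFun h0 i)
      · intro i
        obtain ⟨j, hj⟩ := hr i
        refine ⟨fun i' => A i' j, ?_, hj⟩
        show _ ∈ List.ofFn fun j : Fin v => fun i => A i j
        exact List.mem_ofFn.mpr ⟨j, rfl⟩
      · rw [rR_ofFn]
        exact hred
    · simp only [toMat]
      refine sigma3_eq (by rw [List.length_ofFn]) ?_
      intro i j
      show (List.ofFn fun j : Fin v => fun i => A i j).get j i = _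
      rw [List.get_ofFn]

end BQAux
namespace BQAux

lemma toMat_colSums (q : Σ u : ℕ, Cols u) : colSums (toMat q).2.2 = colS q.2 := by
  obtain ⟨u, L⟩ := q
  show colSums (Matrix.of fun i j => L.get j i) = colS L; rw [← colS_ofFn]
  exact congrArg colS (ofFn_toMat L)

lemma toMat_rowSums (q : Σ u : ℕ, Cols u) : rowSums (toMat q).2.2 = rowS q.2 := by
  obtain ⟨u, L⟩ := q
  show rowSums (Matrix.of fun i j => L.get j i) = rowS L; rw [← rowS_ofFn]
  exact congrArg rowS (ofFn_toMat L)

end BQAux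

/-- The Bernstein homomorphism of `QSym` itself is the flipped internal comultiplication
`τ ∘ Δ_P`:  for every composition `γ`,
`∑_α ξ_α(M_γ) ⊗ M_α = ∑_{A reduced, (read A)^red = γ} M_{column A} ⊗ M_{row A}`,
the right-hand sum ranging over all reduced matrices `A` of nonnegative integers (of any size
`u × v`) whose row-by-row reading word, after deleting zeros, equals `γ`. -/
theorem bernstein_QSym_eq_flipped_internal_comul (k : Type*) [CommRing k]
    (γ : List ℕ) (hγ : IsComposition γ) :
    ∑ᶠ α ∈ {α : List ℕ | IsComposition α}, xiQ k α (Mq k γ) ⊗ₜ[k] Mq k α =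
      ∑ᶠ p ∈ {p : Σ u : ℕ, Σ v : ℕ, Matrix (Fin u) (Fin v) ℕ |
          MatReduced p.2.2 ∧ redList (readM p.2.2) = γ},
        Mq k (colSums p.2.2) ⊗ₜ[k] Mq k (rowSums p.2.2) := by
  classical
  have hL : ∑ᶠ α ∈ {α : List ℕ | IsComposition α}, xiQ k α (Mq k γ) ⊗ₜ[k] Mq k α
      = ∑ α ∈ BQAux.comps γ.sum, xiQ k α (Mq k γ) ⊗ₜ[k] Mq k α := by
    apply finsum_mem_eq_sum_of_inter_support_eq
    ext α
    simp only [Set.mem_inter_iff, Set.mem_setOf_eq, Function.mem_support, Finset.mem_coe,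
      BQAux.mem_comps]
    constructor
    · rintro ⟨hcomp, hne⟩
      refine ⟨⟨hcomp, ?_⟩, hne⟩
      by_contra hsum
      exact hne (by rw [BQAux.xiQ_ne_deg k α γ hsum]; exact TensorProduct.zero_tmul _ _)
    · rintro ⟨⟨hcomp, _⟩, hne⟩
      exact ⟨hcomp, hne⟩
  rw [hL, BQAux.main_eq k γ.length γ le_rfl hγ, ← finsum_mem_coe_finset]
  exact finsum_mem_eq_of_bijOn BQAux.toMat (BQAux.toMat_bijOn γ hγ)
    (fun q _ => by rw [BQAux.toMat_colSums, BQAux.toMat_rowSums])
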